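/- Let F₂ be the free group on x and y. Define γ₂ = x(xy³)x y⁻¹x⁻¹, γ₃ = (xy)x²y³xy⁻¹x⁻¹(y⁻¹x⁻¹), and γₛ = (xy)^{s-2} x² y³ x (y⁻¹x⁻¹)^{s-1} for s ≥ 4. Then for any n ≥ 2 the elements γ₂, ..., γₙ generate a free subgroup of F₂ of rank n−1, with the γₛ as a free basis. -/

import Mathlib

/-!
Statement 4: with `γ₂ = x(xy³)x y⁻¹x⁻¹`, `γ₃ = (xy)x²y³xy⁻¹x⁻¹(y⁻¹x⁻¹)` and
`γₛ = (xy)^{s-2} x² y³ x (y⁻¹x⁻¹)^{s-1}` for `s ≥ 4`, for any `n ≥ 2` the elements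
`γ₂, …, γₙ` form a free basis of a free subgroup of `F₂` of rank `n − 1`.
Expressed via injectivity of the lift `FreeGroup (Fin (n-1)) →* F₂`, index `i`
corresponding to `s = i + 2`.
-/

namespace Stmt4

abbrev F2 := FreeGroup (Fin 2)

def x : F2 := FreeGroup.of 0
def y : F2 := FreeGroup.of 1

def γ (s : ℕ) : F2 :=
  if s = 2 then x * (x * y ^ 3) * x * y⁻¹ * x⁻¹
  else if s = 3 then (x * y) * x ^ 2 * y ^ 3 * x * y⁻¹ * x⁻¹ * (y⁻¹ * x⁻¹)
  else (x * y) ^ (s - 2) * x ^ 2 * y ^ 3 * x * (y⁻¹ * x⁻¹) ^ (s - 1)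

/- ## Auxiliary development

We embed the subgroup generated by the `γ`'s into the semidirect product
`FreeGroup ℤ ⋊ ℤ` (with `ℤ` acting by shifting the generators), where the images
of the `γ`'s become words that multiply with no cancellation. -/

section WordCombinatorics

attribute [local simp] List.Chain'

open FreeGroup

/-- Cancellation-free adjacency predicate on letters of a word. -/
def Pred {α : Type*} (a b : α × Bool) : Prop := ¬(a.1 = b.1 ∧ a.2 = !b.2)

lemma chain'_reduce {α : Type*} [DecidableEq α] (L : List (α × Bool)) :
    List.Chain' Pred (reduce L) := by
  induction L with
  | nil => simp
  | cons a L ih =>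
    rw [FreeGroup.reduce.cons]
    cases hr : reduce L with
    | nil => simp
    | cons hd tl =>
      rw [hr] at ih
      dsimp only
      by_cases h : a.1 = hd.1 ∧ a.2 = !hd.2
      · rw [if_pos h]; exact ih.tail
      · rw [if_neg h]; exact List.isChain_cons_cons.2 ⟨h, ih⟩

lemma reduce_eq_self_of_chain' {α : Type*} [DecidableEq α] (L : List (α × Bool))
    (h : List.Chain' Pred L) : reduce L = L := by
  induction L with
  | nil => rfl
  | cons a L ih =>
    rw [FreeGroup.reduce.cons, ih h.tail]
    cases L with
    | nil => rfl
    | cons b L' =>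
      dsimp only
      rw [if_neg (List.isChain_cons_cons.mp h).1]

lemma mk_ne_one {α : Type*} [DecidableEq α] {L : List (α × Bool)}
    (h : List.Chain' Pred L) (hL : L ≠ []) : FreeGroup.mk L ≠ 1 := by
  intro he
  apply hL
  have := congrArg FreeGroup.toWord he
  rwa [FreeGroup.toWord_mk, reduce_eq_self_of_chain' L h, FreeGroup.toWord_one] at this

lemma of_inv {α : Type*} (a : α) : (FreeGroup.of a)⁻¹ = FreeGroup.mk [(a, false)] := by
  rw [show (FreeGroup.of a : FreeGroup α) = FreeGroup.mk [(a, true)] from rfl, FreeGroup.inv_mk]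
  rfl

lemma mk_cons_t {α : Type*} (a : α) (L : List (α × Bool)) :
    FreeGroup.mk ((a, true) :: L) = FreeGroup.of a * FreeGroup.mk L := by
  rw [show (FreeGroup.of a : FreeGroup α) = FreeGroup.mk [(a, true)] from rfl, FreeGroup.mul_mk]
  rfl

lemma mk_cons_f {α : Type*} (a : α) (L : List (α × Bool)) :
    FreeGroup.mk ((a, false) :: L) = (FreeGroup.of a)⁻¹ * FreeGroup.mk L := by
  rw [of_inv, FreeGroup.mul_mk]
  rfl

end WordCombinatorics

section Semidirect

open FreeGroup SemidirectProduct

abbrev FZ := FreeGroup ℤ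

/-- The shift automorphism of `FreeGroup ℤ`. -/
def shE (e : ℤ) : FZ ≃* FZ := FreeGroup.freeGroupCongr (Equiv.addRight e)

lemma shE_apply (e : ℤ) (z : FZ) : shE e z = FreeGroup.map (· + e) z := by
  simp only [shE, FreeGroup.freeGroupCongr_apply, Equiv.coe_addRight]

lemma shE_of (e j : ℤ) : shE e (FreeGroup.of j) = FreeGroup.of (j + e) := by
  rw [shE_apply, FreeGroup.map.of]

lemma shE_shE (a b : ℤ) (z : FZ) : shE a (shE b z) = shE (b + a) z := by
  rw [shE_apply, shE_apply, shE_apply, FreeGroup.map.comp]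
  have h : ((· + a) ∘ (· + b) : ℤ → ℤ) = (· + (b + a)) := funext fun t => by
    simp [Function.comp, add_assoc]
  exact DFunLike.congr_fun (congrArg FreeGroup.map h) z

/-- Shift action of `ℤ` on `FreeGroup ℤ`. -/
def φA : Multiplicative ℤ →* MulAut FZ where
  toFun e := shE e.toAdd
  map_one' := by
    ext z
    show shE 0 z = z
    rw [shE_apply]
    have : (fun t : ℤ => t + 0) = fun t => t := by funext t; ring
    rw [this, FreeGroup.map.id']
  map_mul' a b := by
    ext z
    show shE (a.toAdd + b.toAdd) z = shE a.toAdd (shE b.toAdd z)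
    rw [shE_shE, add_comm]

abbrev W := SemidirectProduct FZ (Multiplicative ℤ) φA

lemma φA_apply (e : ℤ) (z : FZ) : φA (Multiplicative.ofAdd e) z = shE e z := rfl

lemma TinL (e : ℤ) (z : FZ) :
    (inr (Multiplicative.ofAdd e) : W) * inl z = inl (shE e z) * inr (Multiplicative.ofAdd e) := by
  have h := SemidirectProduct.inl_aut (φ := φA) (Multiplicative.ofAdd e) z
  rw [φA_apply] at h
  rw [h, mul_assoc (inr (Multiplicative.ofAdd e) * inl z)]
  simp [← _root_.map_mul]

lemma TzinL (e : ℤ) (z : FZ) :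
    (inr (Multiplicative.ofAdd e) : W) * inl z * (inr (Multiplicative.ofAdd e))⁻¹
      = inl (shE e z) := by
  rw [TinL]
  group

/-- The basic word `g₀ g₁⁻¹ g₂⁻¹ g₃`, shifted by `s`. -/
def Qs (s : ℤ) : FZ := .of s * (.of (s+1))⁻¹ * (.of (s+2))⁻¹ * .of (s+3)

/-- The free family in `W`. -/
def bb (s : ℤ) : W := inl (Qs s) * inr (Multiplicative.ofAdd 2)

lemma shE_Qs (e s : ℤ) : shE e (Qs s) = Qs (s + e) := by
  simp only [Qs, _root_.map_mul, _root_.map_inv, shE_of]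
  ring_nf

end Semidirect

section Core

attribute [local simp] List.Chain'

open FreeGroup SemidirectProduct

def blockP (s : ℤ) : List (ℤ × Bool) := [(s, true), (s+1, false), (s+2, false), (s+3, true)]
def blockN (s : ℤ) : List (ℤ × Bool) := [(s+3, false), (s+2, true), (s+1, true), (s, false)]

lemma mk_blockP (s : ℤ) : FreeGroup.mk (blockP s) = Qs s := by
  rw [blockP, Qs, mk_cons_t, mk_cons_f, mk_cons_f, mk_cons_t,
    show FreeGroup.mk ([] : List (ℤ × Bool)) = 1 from rfl]
  group

lemma mk_blockN (s : ℤ) : FreeGroup.mk (blockN s) = (Qs s)⁻¹ := by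
  rw [blockN, Qs, mk_cons_f, mk_cons_t, mk_cons_t, mk_cons_f,
    show FreeGroup.mk ([] : List (ℤ × Bool)) = 1 from rfl]
  group

variable {ι : Type*} [DecidableEq ι] (κ : ι → ℤ)

/-- The image word (a concatenation of blocks of length 4, with a running twist). -/
def Bl : ℤ → List (ι × Bool) → List (ℤ × Bool)
  | _, [] => []
  | e, (i, true) :: r => blockP (κ i + e) ++ Bl (2 + e) r
  | e, (i, false) :: r => blockN (κ i + (-2 + e)) ++ Bl (-2 + e) r

def Lb : FreeGroup ι →* W := FreeGroup.lift fun i => bb (κ i)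

lemma bb_left (s : ℤ) : (bb s).left = Qs s := by simp [bb]
lemma bb_right (s : ℤ) : (bb s).right = Multiplicative.ofAdd 2 := by simp [bb]

omit [DecidableEq ι] in
lemma master (ℓ : List (ι × Bool)) : ∀ e : ℤ,
    shE e ((Lb κ (FreeGroup.mk ℓ)).left) = FreeGroup.mk (Bl κ e ℓ) := by
  induction ℓ with
  | nil =>
    intro e
    rw [show FreeGroup.mk ([] : List (ι × Bool)) = 1 from FreeGroup.one_eq_mk.symm]
    simp [Bl]
    exact FreeGroup.one_eq_mk
  | cons p r ih =>
    obtain ⟨i, b⟩ := p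
    intro e
    cases b
    · -- false
      rw [mk_cons_f, _root_.map_mul, _root_.map_inv,
        show (Lb κ) (FreeGroup.of i) = bb (κ i) from FreeGroup.lift_apply_of]
      rw [SemidirectProduct.mul_left]
      rw [show ((bb (κ i))⁻¹).left = φA ((bb (κ i)).right)⁻¹ ((bb (κ i)).left)⁻¹ from rfl]
      rw [show ((bb (κ i))⁻¹).right = ((bb (κ i)).right)⁻¹ from rfl]
      rw [bb_left, bb_right]
      rw [show (Multiplicative.ofAdd (2:ℤ))⁻¹ = Multiplicative.ofAdd (-2:ℤ) from rfl]
      rw [φA_apply, φA_apply]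
      simp only [_root_.map_mul, _root_.map_inv, shE_shE, shE_Qs]
      rw [ih (-2 + e), add_assoc]
      rw [show Bl κ e ((i, false) :: r) = blockN (κ i + (-2 + e)) ++ Bl κ (-2 + e) r from rfl,
        ← FreeGroup.mul_mk, mk_blockN]
    · -- true
      rw [mk_cons_t, _root_.map_mul,
        show (Lb κ) (FreeGroup.of i) = bb (κ i) from FreeGroup.lift_apply_of]
      rw [SemidirectProduct.mul_left, bb_left, bb_right]
      rw [φA_apply]
      simp only [_root_.map_mul, shE_shE, shE_Qs]
      rw [ih (2 + e)]
      rw [show Bl κ e ((i, true) :: r) = blockP (κ i + e) ++ Bl κ (2 + e) r from rfl,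
        ← FreeGroup.mul_mk, mk_blockP]

lemma chain_blockP (s : ℤ) : List.Chain' Pred (blockP s) := by
  simp [blockP, List.isChain_cons_cons, Pred]

lemma chain_blockN (s : ℤ) : List.Chain' Pred (blockN s) := by
  simp [blockN, List.isChain_cons_cons, Pred]

omit [DecidableEq ι] in
lemma Bl_ne_nil {ℓ : List (ι × Bool)} (h : ℓ ≠ []) (e : ℤ) : Bl κ e ℓ ≠ [] := by
  match ℓ with
  | [] => exact absurd rfl h
  | (i, true) :: r => simp [Bl, blockP]
  | (i, false) :: r => simp [Bl, blockN]

omit [DecidableEq ι] in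
lemma chain_Bl (hκ : Function.Injective κ) (ℓ : List (ι × Bool)) :
    ∀ e : ℤ, List.Chain' Pred ℓ → List.Chain' Pred (Bl κ e ℓ) := by
  induction ℓ with
  | nil => intro e _; simp [Bl]
  | cons p r ih =>
    obtain ⟨i, b⟩ := p
    intro e h
    have hblock : List.Chain' Pred
        (if b then blockP (κ i + e) else blockN (κ i + (-2 + e))) := by
      cases b <;> simp [chain_blockP, chain_blockN, -List.Chain']
    have hBl : Bl κ e ((i, b) :: r) =
        (if b then blockP (κ i + e) else blockN (κ i + (-2 + e))) ++
          Bl κ ((if b then 2 else -2) + e) r := by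
      cases b <;> rfl
    rw [hBl, List.Chain', List.isChain_append]
    refine ⟨hblock, ih _ h.tail, ?_⟩
    intro p₁ hp₁ p₂ hp₂
    have hp₁' : p₁ = (if b then (κ i + e + 3, true) else (κ i + (-2 + e), false)) := by
      cases b <;> simpa [blockP, blockN, eq_comm] using hp₁
    match r with
    | [] =>
      rw [show Bl κ ((if b then 2 else -2) + e) ([] : List (ι × Bool)) = [] from by
        cases b <;> rfl] at hp₂
      simp at hp₂
    | (j, b') :: r' =>
      have hne : b = !b' → κ i ≠ κ j := by
        intro hbb hij
        have hPij : Pred (i, b) (j, b') := (List.isChain_cons_cons.mp h).1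
        exact hPij ⟨hκ hij, hbb⟩
      have hp₂' : p₂ = (if b' then (κ j + ((if b then 2 else -2) + e), true)
          else (κ j + (-2 + ((if b then 2 else -2) + e)) + 3, false)) := by
        cases b <;> cases b' <;> simpa [Bl, blockP, blockN, eq_comm] using hp₂
      rw [hp₁', hp₂']
      cases b <;> cases b' <;> simp [Pred] <;>
        (intro hh; exact absurd (by omega : κ i = κ j) (hne rfl))

lemma Lb_inj (hκ : Function.Injective κ) : Function.Injective (Lb κ) := by
  rw [injective_iff_map_eq_one]
  intro w hw
  by_contra hne
  have hl : w.toWord ≠ [] := fun hh => hne (FreeGroup.toWord_eq_nil_iff.mp hh)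
  have hchain : List.Chain' Pred w.toWord := by
    rw [← FreeGroup.reduce_toWord]
    exact chain'_reduce _
  have hmw : FreeGroup.mk w.toWord = w := FreeGroup.mk_toWord
  have h1 : shE 0 ((Lb κ w).left) = FreeGroup.mk (Bl κ 0 w.toWord) := by
    conv_lhs => rw [← hmw]
    exact master κ w.toWord 0
  rw [hw] at h1
  simp only [SemidirectProduct.one_left, _root_.map_one] at h1
  exact mk_ne_one (chain_Bl κ hκ w.toWord 0 hchain) (Bl_ne_nil κ hl 0) h1.symm

end Core

section Glue

open FreeGroup SemidirectProduct

/-- A convenient shape of the `γ`'s: conjugates of a fixed element. -/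
lemma γ_eq (k : ℕ) :
    γ (k + 2) = (x*y)^k * (x^2 * y^3 * x * (x*y)⁻¹) * ((x*y)^k)⁻¹ := by
  match k with
  | 0 =>
    rw [show (0:ℕ) + 2 = 2 from rfl, γ, if_pos rfl, pow_zero, one_mul, inv_one, mul_one]
    simp only [pow_succ, pow_zero, one_mul]
    group
  | 1 =>
    rw [show (1:ℕ) + 2 = 3 from rfl, γ, if_neg (by omega), if_pos rfl]
    group
  | (m+2) =>
    rw [γ, if_neg (by omega), if_neg (by omega),
      show m + 2 + 2 - 2 = m + 2 from by omega, show m + 2 + 2 - 1 = m + 3 from by omega,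
      show (y⁻¹ * x⁻¹ : F2) = (x*y)⁻¹ from (mul_inv_rev x y).symm]
    rw [show ((x*y:F2)^(m+2))⁻¹ = ((x*y)⁻¹)^(m+2) from (inv_pow _ _).symm,
      show ((x*y:F2)⁻¹)^(m+3) = (x*y)⁻¹ * ((x*y)⁻¹)^(m+2) from pow_succ' _ (m+2)]
    simp [mul_assoc]

def A : W := inl (FreeGroup.of (0:ℤ))
def T : W := inr (Multiplicative.ofAdd (1:ℤ))

/-- The embedding `F₂ → FreeGroup ℤ ⋊ ℤ`. -/
def ψ : F2 →* W := FreeGroup.lift ![A, A⁻¹ * T]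

lemma ψx : ψ x = A := by
  rw [ψ, x, FreeGroup.lift_apply_of]
  rfl

lemma ψy : ψ y = A⁻¹ * T := by
  rw [ψ, y, FreeGroup.lift_apply_of]
  rfl

lemma ψc : ψ (x * y) = T := by
  rw [_root_.map_mul, ψx, ψy]
  group

lemma Tpow (k : ℕ) : T ^ k = inr (Multiplicative.ofAdd (k : ℤ)) := by
  rw [T, ← _root_.map_pow]
  congr 1
  rw [← ofAdd_nsmul]
  norm_num

lemma TT : T * T = inr (Multiplicative.ofAdd (2:ℤ)) := by
  rw [T, ← _root_.map_mul]
  rfl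

lemma TTT : T * (T * T) = inr (Multiplicative.ofAdd (3:ℤ)) := by
  rw [TT, T, ← _root_.map_mul]
  rfl

lemma ψd : ψ (x^2 * y^3 * x * (x*y)⁻¹) = bb 0 := by
  have e1 : ψ (x^2 * y^3 * x * (x*y)⁻¹)
      = A * ((T * A⁻¹) * T⁻¹) * (((T * T) * A⁻¹) * (T * T)⁻¹)
        * (((T * (T * T)) * A) * (T * (T * T))⁻¹) * (T * T) := by
    rw [_root_.map_mul, _root_.map_mul, _root_.map_mul, _root_.map_inv,
      _root_.map_pow, _root_.map_pow, ψc, ψx, ψy]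
    simp only [pow_succ, pow_zero, one_mul]
    group
  rw [e1, TTT, TT,
    show (A⁻¹ : W) = inl ((FreeGroup.of (0:ℤ))⁻¹) from by rw [A, ← _root_.map_inv], A,
    show (T : W) = inr (Multiplicative.ofAdd (1:ℤ)) from rfl,
    TzinL, TzinL, TzinL]
  simp only [_root_.map_inv, shE_of]
  rw [bb]
  simp only [← _root_.map_inv, ← _root_.map_mul]
  norm_num [Qs]

lemma ψγ (k : ℕ) : ψ (γ (k + 2)) = bb (k : ℤ) := by
  rw [γ_eq, _root_.map_mul, _root_.map_mul, _root_.map_inv, _root_.map_pow, ψc, ψd, Tpow]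
  rw [bb, bb, ← mul_assoc, TinL, shE_Qs, zero_add]
  rw [mul_assoc, mul_assoc]
  congr 1
  rw [← _root_.map_inv, ← _root_.map_mul, ← _root_.map_mul]
  congr 1
  rw [mul_comm (Multiplicative.ofAdd (2:ℤ))]
  exact mul_inv_cancel_left _ _

end Glue

theorem stmt_4 (n : ℕ) (hn : 2 ≤ n) :
    Function.Injective (FreeGroup.lift fun i : Fin (n - 1) => γ ((i : ℕ) + 2)) := by
  have hκ : Function.Injective (fun i : Fin (n - 1) => ((i : ℕ) : ℤ)) := by
    intro a b h
    simp only at h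
    exact Fin.ext (by exact_mod_cast h)
  have hcomp : ψ.comp (FreeGroup.lift fun i : Fin (n - 1) => γ ((i : ℕ) + 2))
      = Lb (fun i : Fin (n - 1) => ((i : ℕ) : ℤ)) := by
    apply FreeGroup.ext_hom
    intro a
    simp only [MonoidHom.comp_apply, FreeGroup.lift_apply_of, Lb]
    exact ψγ (a : ℕ)
  intro u v huv
  apply Lb_inj _ hκ
  have h1 := congrArg ψ huv
  calc Lb (fun i : Fin (n - 1) => ((i : ℕ) : ℤ)) u
      = (ψ.comp (FreeGroup.lift fun i : Fin (n - 1) => γ ((i : ℕ) + 2))) u := by rw [hcomp]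
    _ = (ψ.comp (FreeGroup.lift fun i : Fin (n - 1) => γ ((i : ℕ) + 2))) v := by
        simp only [MonoidHom.comp_apply]; exact h1
    _ = Lb (fun i : Fin (n - 1) => ((i : ℕ) : ℤ)) v := by rw [hcomp]

end Stmt4
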